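/- A condensed set X is discrete if and only if it satisfies the colimit condition: for every profinite set S, writing S as the limit of the cofiltered diagram of its discrete quotients S_i with projections π_i : S → S_i, the cocone on the diagram i ↦ X(S_i) with cocone point X(S) and coprojections X(π_i) is a colimit cocone; equivalently, the canonical map colim_i X(S_i) → X(S) is an isomorphism. -/
import Mathlib


universe u

open CategoryTheory Limits

/-- A condensed set `X` is discrete if and only if it satisfies the colimit condition: for every
profinite set `S`, written as the limit of the cofiltered diagram of its discrete quotients `Sᵢ`
with projections `πᵢ : S → Sᵢ` (this is `S.asLimitCone`), the cocone on the diagram `i ↦ X(Sᵢ)`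
with cocone point `X(S)` and coprojections `X(πᵢ)` is a colimit cocone. -/
theorem condensedSet_isDiscrete_iff_colimitCondition (X : CondensedSet.{u}) :
    X.IsDiscrete ↔ ∀ S : Profinite.{u},
      Nonempty (IsColimit <| (profiniteToCompHaus.op ⋙ X.val).mapCocone S.asLimitCone.op) := (CondensedSet.isDiscrete_tfae X).out 0 6
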